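/- Let (Ψ₀,Ψ₁) be an admissible pair of shape functions and let F₀(x) = Σₖ [Ψ₀(λₖ(x)) fₖ + Ψ₁(λₖ(x)) Aₖ(x − pₖ)] over a non-degenerate triangle. Then F₀(pᵢ) = fᵢ and F₀′(pᵢ) = Aᵢ for i = 1,2,3. -/

import Mathlib

def det2 (u v : Fin 2 → ℝ) : ℝ := u 0 * v 1 - u 1 * v 0

noncomputable def bary (p : Fin 3 → Fin 2 → ℝ) (i : Fin 3) (x : Fin 2 → ℝ) : ℝ :=
  det2 (x - p (i + 1)) (x - p (i + 2)) / det2 (p i - p (i + 1)) (p i - p (i + 2))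

lemma det2_ne_zero_of_li {u v : Fin 2 → ℝ} (h : LinearIndependent ℝ ![u, v]) :
    det2 u v ≠ 0 := by
  intro hd
  rw [LinearIndependent.pair_iff] at h
  have h1 := h (v 1) (-(u 1)) (by
    funext j; fin_cases j <;>
      simp only [Pi.add_apply, Pi.smul_apply, smul_eq_mul, Pi.zero_apply] <;>
      simp [det2] at hd ⊢ <;> linarith)
  have h2 := h (-(v 0)) (u 0) (by
    funext j; fin_cases j <;>
      simp only [Pi.add_apply, Pi.smul_apply, smul_eq_mul, Pi.zero_apply] <;>
      simp [det2] at hd ⊢ <;> linarith)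
  have hu1 : u 1 = 0 := by have := h1.2; linarith
  have hv0 : v 0 = 0 := by have := h2.1; linarith
  have := h 1 0 (by
    funext j; fin_cases j <;>
      simp only [Pi.add_apply, Pi.smul_apply, smul_eq_mul, Pi.zero_apply] <;>
      simp [h1.1, h2.2, hu1, hv0])
  exact one_ne_zero this.1

lemma denom_ne_zero (p : Fin 3 → Fin 2 → ℝ) (hp : AffineIndependent ℝ p) (i : Fin 3) :
    det2 (p i - p (i + 1)) (p i - p (i + 2)) ≠ 0 := by
  have hli := (affineIndependent_iff_linearIndependent_vsub ℝ p i).mp hp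
  have h1 : i + 1 ≠ i := by fin_cases i <;> decide
  have h2 : i + 2 ≠ i := by fin_cases i <;> decide
  have h12 : i + 1 ≠ i + 2 := by fin_cases i <;> decide
  have hinj : Function.Injective (![⟨i + 1, h1⟩, ⟨i + 2, h2⟩] : Fin 2 → {x // x ≠ i}) := by
    intro a b hab
    fin_cases a <;> fin_cases b <;> simp_all [Subtype.ext_iff]
  have hpair : LinearIndependent ℝ ![p (i + 1) - p i, p (i + 2) - p i] := by
    have := hli.comp (![⟨i + 1, h1⟩, ⟨i + 2, h2⟩] : Fin 2 → {x // x ≠ i}) hinj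
    convert this using 1
    funext j; fin_cases j <;> simp [vsub_eq_sub]
    all_goals rfl
  have hne := det2_ne_zero_of_li hpair
  intro hd
  apply hne
  simp only [det2, Pi.sub_apply] at hd ⊢
  linarith

lemma bary_self (p : Fin 3 → Fin 2 → ℝ) (hp : AffineIndependent ℝ p) (i : Fin 3) :
    bary p i (p i) = 1 :=
  div_self (denom_ne_zero p hp i)

lemma bary_ne (p : Fin 3 → Fin 2 → ℝ) (i k : Fin 3) (hk : k ≠ i) :
    bary p k (p i) = 0 := by
  have h : i = k + 1 ∨ i = k + 2 := by
    fin_cases i <;> fin_cases k <;> first | (exact absurd rfl hk) | decide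
  rcases h with h | h <;> rw [h] <;> simp [bary, det2]

lemma bary_diff (p : Fin 3 → Fin 2 → ℝ) (k : Fin 3) : Differentiable ℝ (bary p k) := by
  unfold bary det2
  simp only [div_eq_mul_inv, Pi.sub_apply]
  fun_prop

theorem stmt15 (p : Fin 3 → Fin 2 → ℝ) (hp : AffineIndependent ℝ p)
    (Ψ₀ Ψ₁ : ℝ → ℝ) (hΨ₀ : ContDiff ℝ 1 Ψ₀) (hΨ₁ : ContDiff ℝ 1 Ψ₁)
    (h₀0 : Ψ₀ 0 = 0) (h₀d0 : deriv Ψ₀ 0 = 0) (h₁0 : Ψ₁ 0 = 0) (h₁d0 : deriv Ψ₁ 0 = 0)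
    (h₀d1 : deriv Ψ₀ 1 = 0) (h₀1 : Ψ₀ 1 = 1) (h₁1 : Ψ₁ 1 = 1)
    (f : Fin 3 → ℝ) (A : Fin 3 → (Fin 2 → ℝ) →L[ℝ] ℝ) (i : Fin 3) :
    (fun x => ∑ k, (Ψ₀ (bary p k x) * f k + Ψ₁ (bary p k x) * A k (x - p k))) (p i) = f i ∧
    fderiv ℝ (fun x => ∑ k, (Ψ₀ (bary p k x) * f k + Ψ₁ (bary p k x) * A k (x - p k))) (p i)
      = A i := by
  constructor
  · have hval : ∀ k, Ψ₀ (bary p k (p i)) * f k + Ψ₁ (bary p k (p i)) * A k (p i - p k)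
        = if k = i then f i else 0 := by
      intro k
      by_cases hk : k = i
      · subst hk; rw [bary_self p hp k, h₀1, h₁1]; simp
      · rw [bary_ne p i k hk, h₀0, h₁0]; simp [hk]
    simp only
    rw [Finset.sum_congr rfl (fun k _ => hval k)]
    simp
  · have hterm : ∀ k, HasFDerivAt
        (fun x => Ψ₀ (bary p k x) * f k + Ψ₁ (bary p k x) * A k (x - p k))
        (if k = i then A i else 0) (p i) := by
      intro k
      have hb : HasFDerivAt (bary p k) (fderiv ℝ (bary p k) (p i)) (p i) :=
        (bary_diff p k (p i)).hasFDerivAt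
      have hd0 : HasDerivAt Ψ₀ (deriv Ψ₀ (bary p k (p i))) (bary p k (p i)) :=
        (hΨ₀.differentiable one_ne_zero (bary p k (p i))).hasDerivAt
      have hd1 : HasDerivAt Ψ₁ (deriv Ψ₁ (bary p k (p i))) (bary p k (p i)) :=
        (hΨ₁.differentiable one_ne_zero (bary p k (p i))).hasDerivAt
      have hc1 : HasFDerivAt (fun x => Ψ₀ (bary p k x))
          (deriv Ψ₀ (bary p k (p i)) • fderiv ℝ (bary p k) (p i)) (p i) :=
        hd0.comp_hasFDerivAt (p i) hb
      have hc2 : HasFDerivAt (fun x => Ψ₁ (bary p k x))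
          (deriv Ψ₁ (bary p k (p i)) • fderiv ℝ (bary p k) (p i)) (p i) :=
        hd1.comp_hasFDerivAt (p i) hb
      have hA : HasFDerivAt (fun x => A k (x - p k)) (A k) (p i) := by
        have heq : (fun x : Fin 2 → ℝ => A k (x - p k))
            = fun x => A k x - A k (p k) := by funext x; rw [map_sub]
        rw [heq]
        exact (A k).hasFDerivAt.sub_const _
      refine ((hc1.mul_const (f k)).add (hc2.mul hA)).congr_fderiv ?_
      by_cases hk : k = i
      · subst hk
        rw [bary_self p hp k, h₀d1, h₁1]
        simp
      · rw [bary_ne p i k hk, h₀d0, h₁0, h₁d0]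
        simp [hk]
    have hsum : HasFDerivAt
        (fun x => ∑ k, (Ψ₀ (bary p k x) * f k + Ψ₁ (bary p k x) * A k (x - p k)))
        (∑ k, if k = i then A i else 0) (p i) :=
      HasFDerivAt.fun_sum (fun k _ => hterm k)
    rw [hsum.fderiv]
    simp
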